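/- Let N, l, L be natural numbers with l ≤ L and l < N, and let h : Fin (l+1) → ℂ. Let H be the (N+L) × (N+L) circulant channel matrix of h, let A ∈ Matrix (Fin (N+L)) (Fin N) ℂ be the cyclic-prefix insertion matrix, and let B = [0_{N×L} | I_N] ∈ Matrix (Fin N) (Fin (N+L)) ℂ be the cyclic-prefix removal matrix. Then B·H·A equals the N × N circulant matrix C defined by C i j = h k whenever (i−j) mod N = k for some 0 ≤ k ≤ l, and C i j = 0 otherwise. -/
import Mathlib


open Matrix

/-- The `(N+L) × (N+L)` circulant channel matrix built from the taps `h`. -/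
noncomputable def circulantChannel (N l L : ℕ) (h : Fin (l + 1) → ℂ) :
    Matrix (Fin (N + L)) (Fin (N + L)) ℂ :=
  Matrix.of fun i j =>
    if hd : (i.val + (N + L) - j.val) % (N + L) ≤ l then
      h ⟨(i.val + (N + L) - j.val) % (N + L), by omega⟩
    else 0

/-- The cyclic-prefix insertion matrix: `A i j = 1` if (`i ≥ L` and `j = i - L`)
or (`i < L` and `j = N - L + i`), and `0` otherwise. -/
def cpInsertion (N L : ℕ) : Matrix (Fin (N + L)) (Fin N) ℂ :=
  Matrix.of fun i j =>
    if (L ≤ i.val ∧ j.val + L = i.val) ∨ (i.val < L ∧ j.val + L = N + i.val)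
    then 1 else 0

/-- The cyclic-prefix removal matrix `B = [0_{N×L} | I_N]`. -/
def cpRemoval (N L : ℕ) : Matrix (Fin N) (Fin (N + L)) ℂ :=
  Matrix.of fun i j => if j.val = i.val + L then 1 else 0

/-- The `N × N` circulant matrix built from the taps `h`. -/
noncomputable def circulantSmall (N l : ℕ) (h : Fin (l + 1) → ℂ)
    (hlN : l < N) : Matrix (Fin N) (Fin N) ℂ :=
  Matrix.of fun i j =>
    if hd : (i.val + N - j.val) % N ≤ l then
      h ⟨(i.val + N - j.val) % N, by omega⟩
    else 0

lemma mod_of_lt_two_mul (m a : ℕ) (h2 : a < 2 * m) :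
    a % m = if a < m then a else a - m := by
  split_ifs with h1
  · exact Nat.mod_eq_of_lt h1
  · rw [Nat.mod_eq_sub_mod (by omega)]
    exact Nat.mod_eq_of_lt (by omega)

/-- with a cyclic prefix of length `L ≥ l`, prefix removal turns
the linear convolution into a circular one: `B·H·A = C`. -/
theorem cp_removal_circularizes (N l L : ℕ) (hlL : l ≤ L) (hlN : l < N)
    (h : Fin (l + 1) → ℂ) :
    cpRemoval N L * circulantChannel N l L h * cpInsertion N L =
      circulantSmall N l h hlN := by
  have heval : ∀ (p q : Fin (N + L)) (v : ℕ),
      (p.val + (N + L) - q.val) % (N + L) = v →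
      circulantChannel N l L h p q = if hv : v ≤ l then h ⟨v, by omega⟩ else 0 := by
    intro p q v hv
    simp only [circulantChannel, of_apply]
    subst hv
    rfl
  have hsmall : ∀ (p q : Fin N) (v : ℕ),
      (p.val + N - q.val) % N = v →
      circulantSmall N l h hlN p q = if hv : v ≤ l then h ⟨v, by omega⟩ else 0 := by
    intro p q v hv
    simp only [circulantSmall, of_apply]
    subst hv
    rfl
  ext i j
  rw [Matrix.mul_apply]
  have hiL : i.val + L < N + L := by omega
  have hBH : ∀ q, (cpRemoval N L * circulantChannel N l L h) i q
      = circulantChannel N l L h ⟨i.val + L, hiL⟩ q := by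
    intro q
    rw [Matrix.mul_apply]
    rw [Finset.sum_eq_single (⟨i.val + L, hiL⟩ : Fin (N + L))]
    · simp [cpRemoval]
    · intro p _ hp
      have hne : ¬ (p.val = i.val + L) := fun hc => hp (Fin.ext hc)
      simp [cpRemoval, hne]
    · simp
  simp only [hBH]
  -- RHS value
  rcases le_or_gt j.val i.val with hji | hij
  · -- case j ≤ i : main term at q = j + L
    have hmain := heval ⟨i.val + L, hiL⟩ ⟨j.val + L, by omega⟩ (i.val - j.val)
      (by
        try simp only [Fin.val_mk]
        rw [mod_of_lt_two_mul _ _ (by omega)]; split_ifs <;> omega)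
    rw [Finset.sum_eq_single (⟨j.val + L, by omega⟩ : Fin (N + L))]
    · rw [hmain, hsmall i j (i.val - j.val)
        (by
        try simp only [Fin.val_mk]
        rw [mod_of_lt_two_mul _ _ (by omega)]; split_ifs <;> omega)]
      have hA : cpInsertion N L ⟨j.val + L, by omega⟩ j = 1 := by
        simp [cpInsertion]
      rw [hA, mul_one]
    · intro q _ hq
      simp only [cpInsertion, of_apply]
      split_ifs with hc
      · rcases hc with ⟨h1, h2⟩ | ⟨h1, h2⟩
        · exact absurd (Fin.ext (by omega : q.val = j.val + L)) hq
        · -- q = j + L - N, show H = 0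
          rw [heval ⟨i.val + L, hiL⟩ q (i.val + N - j.val)
            (by
        try simp only [Fin.val_mk]
        rw [mod_of_lt_two_mul _ _ (by omega)]; split_ifs <;> omega)]
          rw [dif_neg (by omega), zero_mul]
      · rw [mul_zero]
    · simp
  · -- case i < j
    rcases lt_or_ge (j.val + L) N with hN | hN
    · -- everything is zero
      rw [Finset.sum_eq_zero, hsmall i j (i.val + N - j.val)
          (by
        try simp only [Fin.val_mk]
        rw [mod_of_lt_two_mul _ _ (by omega)]; split_ifs <;> omega),
          dif_neg (by omega)]
      intro q _
      simp only [cpInsertion, of_apply]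
      split_ifs with hc
      · rcases hc with ⟨h1, h2⟩ | ⟨h1, h2⟩
        · rw [heval ⟨i.val + L, hiL⟩ q (i.val + N + L - j.val)
            (by
        try simp only [Fin.val_mk]
        rw [mod_of_lt_two_mul _ _ (by omega)]; split_ifs <;> omega)]
          rw [dif_neg (by omega), zero_mul]
        · omega
      · rw [mul_zero]
    · -- main term at q = j + L - N
      rw [Finset.sum_eq_single (⟨j.val + L - N, by omega⟩ : Fin (N + L))]
      · rw [heval ⟨i.val + L, hiL⟩ ⟨j.val + L - N, by omega⟩ (i.val + N - j.val)
          (by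
        try simp only [Fin.val_mk]
        rw [mod_of_lt_two_mul _ _ (by omega)]; split_ifs <;> omega),
          hsmall i j (i.val + N - j.val)
          (by
        try simp only [Fin.val_mk]
        rw [mod_of_lt_two_mul _ _ (by omega)]; split_ifs <;> omega)]
        have hA : cpInsertion N L ⟨j.val + L - N, by omega⟩ j = 1 := by
          simp only [cpInsertion, of_apply, Fin.val_mk]
          rw [if_pos (Or.inr ⟨by omega, by omega⟩)]
        rw [hA, mul_one]
      · intro q _ hq
        simp only [cpInsertion, of_apply]
        split_ifs with hc
        · rcases hc with ⟨h1, h2⟩ | ⟨h1, h2⟩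
          · rw [heval ⟨i.val + L, hiL⟩ q (i.val + N + L - j.val)
              (by
        try simp only [Fin.val_mk]
        rw [mod_of_lt_two_mul _ _ (by omega)]; split_ifs <;> omega)]
            rw [dif_neg (by omega), zero_mul]
          · exact absurd (Fin.ext (by omega : q.val = j.val + L - N)) hq
        · rw [mul_zero]
      · simp
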